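/- On a sequence graph, for every real-valued flow f : E → ℝ with f(x) ≥ 0 for all edges x, there exist finitely many sequence traversals t_1, …, t_q and nonnegative real coefficients π_1, …, π_q such that f = ∑_{i=1}^q π_i · f(t_i), where f(t_i) denotes the thread flow of t_i. -/

import Mathlib

open scoped Classical
open Finset

noncomputable section

/-- A sequence graph: finite multigraph whose edges are split into segment
edges (`seg`) and bond edges, each segment edge having two distinct endpoints. -/
structure SeqGraph (V E : Type) where
  ends : E → Sym2 V
  seg : E → Prop
  seg_not_diag : ∀ x : E, seg x → ¬ (ends x).IsDiag

namespace SeqGraph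

variable {V E : Type} [Fintype V] [Fintype E]

/-- Incidence multiplicity of vertex `u` on edge `x`. -/
def mult (G : SeqGraph V E) (u : V) (x : E) : ℤ :=
  if G.ends x = s(u, u) then 2 else if u ∈ G.ends x then 1 else 0

/-- The balance condition: at each vertex the total weight of segment-edge
incidences equals the total weight of bond-edge incidences. -/
def IsFlow (G : SeqGraph V E) (f : E → ℤ) : Prop :=
  ∀ u : V,
    (∑ x : E, if G.seg x then G.mult u x * f x else 0) =
      ∑ x : E, if G.seg x then 0 else G.mult u x * f x

/-- ℓ¹ norm of an integer weighting. -/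
def l1 (f : E → ℤ) : ℤ := ∑ x : E, |f x|

/-- A (nonzero) integer flow is minimal if it admits no nontrivial ℓ¹-additive
decomposition into nonzero integer flows. -/
def MinimalFlow (G : SeqGraph V E) (f : E → ℤ) : Prop :=
  ¬ ∃ f₁ f₂ : E → ℤ, G.IsFlow f₁ ∧ G.IsFlow f₂ ∧ f₁ ≠ 0 ∧ f₂ ≠ 0 ∧
      f = f₁ + f₂ ∧ l1 f = l1 f₁ + l1 f₂

/-- A cycle traversal of length `L ≥ 1`. -/
structure CycleTraversal (G : SeqGraph V E) where
  L : ℕ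
  pos : L ≠ 0
  e : ZMod L → E
  v : ZMod L → V
  compat : ∀ i : ZMod L, G.ends (e i) = s(v (i - 1), v i)

variable {G : SeqGraph V E}

/-- Number of indices at which the traversal uses edge `x`. -/
def CycleTraversal.threadCount (t : G.CycleTraversal) (x : E) : ℕ :=
  haveI : NeZero t.L := ⟨t.pos⟩
  (Finset.univ.filter fun i : ZMod t.L => t.e i = x).card

/-- The thread flow of a traversal. -/
def CycleTraversal.threadFlow (t : G.CycleTraversal) : E → ℤ :=
  fun x => (t.threadCount x : ℤ)

/-- A sequence traversal: even length, alternating between segment edges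
(at even indices) and bond edges (at odd indices). -/
def CycleTraversal.IsSeqTraversal (t : G.CycleTraversal) : Prop :=
  Even t.L ∧ ∀ i : ZMod t.L, G.seg (t.e i) ↔ Even i.val

/-- Alternating weighting `∑ i, (-1)^i δ_{e i}` of an (even-length) traversal. -/
def CycleTraversal.altWeight (t : G.CycleTraversal) : E → ℤ :=
  haveI : NeZero t.L := ⟨t.pos⟩
  fun x => ∑ i : ZMod t.L, if t.e i = x then (-1 : ℤ) ^ i.val else 0

/-- Conjugate weighting: keep the value on segment edges, negate on bonds. -/
def conj (G : SeqGraph V E) (g : E → ℤ) : E → ℤ :=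
  fun x => if G.seg x then g x else -g x

/-- Alternating flow: the conjugate of the alternating weighting. -/
def CycleTraversal.altFlow (t : G.CycleTraversal) : E → ℤ :=
  G.conj t.altWeight

/-- Tight: equal edges only appear at indices of equal parity. -/
def CycleTraversal.Tight (t : G.CycleTraversal) : Prop :=
  ∀ i j : ZMod t.L, t.e i = t.e j → i.val % 2 = j.val % 2

/-- Synchronized: coinciding (distinct, same end vertex) indices differ by an
odd integer. -/
def CycleTraversal.Synchronized (t : G.CycleTraversal) : Prop :=
  ∀ i j : ZMod t.L, i ≠ j → t.v i = t.v j → Odd ((i.val : ℤ) - (j.val : ℤ))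

/-- Nested: no interleaved pairs of coinciding indices. -/
def CycleTraversal.Nested (t : G.CycleTraversal) : Prop :=
  ¬ ∃ i₁ i₂ j₁ j₂ : ZMod t.L,
      i₁.val < i₂.val ∧ i₂.val < j₁.val ∧ j₁.val < j₂.val ∧
      t.v i₁ = t.v j₁ ∧ t.v i₂ = t.v j₂

/-- Connectivity: any two vertices are joined by a finite walk along edges. -/
def Connected (G : SeqGraph V E) : Prop :=
  ∀ a b : V, ∃ (n : ℕ) (p : Fin (n + 1) → V), p 0 = a ∧ p (Fin.last n) = b ∧
    ∀ i : Fin n, ∃ x : E, G.ends x = s(p i.castSucc, p i.succ)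

end SeqGraph

/-- The balance condition for real-valued weightings. -/
def SeqGraph.IsFlowR {V E : Type} [Fintype V] [Fintype E]
    (G : SeqGraph V E) (f : E → ℝ) : Prop :=
  ∀ u : V,
    (∑ x : E, if G.seg x then (G.mult u x : ℝ) * f x else 0) =
      ∑ x : E, if G.seg x then 0 else (G.mult u x : ℝ) * f x
set_option linter.unusedSectionVars false
set_option linter.unnecessarySeqFocus false
set_option maxHeartbeats 1000000

namespace SeqGraph

variable {V E : Type} [Fintype V] [Fintype E] {G : SeqGraph V E}

lemma mult_nonneg (u : V) (x : E) : (0:ℤ) ≤ G.mult u x := by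
  unfold mult; split_ifs <;> norm_num

lemma one_le_mult {u : V} {x : E} (h : u ∈ G.ends x) : (1:ℤ) ≤ G.mult u x := by
  unfold mult; split_ifs <;> simp_all

lemma mem_of_mult_ne_zero {u : V} {x : E} (h : G.mult u x ≠ 0) : u ∈ G.ends x := by
  unfold mult at h
  split_ifs at h with h1 h2
  · rw [h1]; exact Sym2.mem_mk_left u u
  · exact h2
  · simp at h

lemma mult_eq {u a b : V} {x : E} (h : G.ends x = s(a,b)) :
    G.mult u x = (if a = u then 1 else 0) + (if b = u then 1 else 0) := by
  unfold mult
  rw [h]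
  by_cases ha : a = u <;> by_cases hb : b = u <;>
    simp [ha, hb, Sym2.eq_iff, Sym2.mem_iff] <;> tauto

lemma parity_succ {L : ℕ} [NeZero L] (hL : Even L) (i : ZMod L) :
    Even ((i + 1).val) ↔ ¬ Even i.val := by
  have hL2 : 1 < L := by
    rcases hL with ⟨m, hm⟩
    have := NeZero.ne L
    omega
  haveI : Fact (1 < L) := ⟨hL2⟩
  have h1 : (i + 1).val = (i.val + 1) % L := by
    rw [ZMod.val_add, ZMod.val_one]
  have h2 : i.val < L := ZMod.val_lt i
  rcases hL with ⟨m, hm⟩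
  by_cases h3 : i.val + 1 < L
  · rw [h1, Nat.mod_eq_of_lt h3, Nat.even_iff, Nat.even_iff]
    omega
  · have h4 : i.val + 1 = L := by omega
    rw [h1, h4, Nat.mod_self, Nat.even_iff, Nat.even_iff]
    omega

lemma isFlowR_threadCount (t : G.CycleTraversal) (ht : t.IsSeqTraversal) :
    G.IsFlowR (fun x => (t.threadCount x : ℝ)) := by
  haveI : NeZero t.L := ⟨t.pos⟩
  intro u
  have key : ∀ P : E → Prop,
      (∑ x : E, if P x then (G.mult u x : ℝ) * (t.threadCount x : ℝ) else 0)
        = ∑ i : ZMod t.L, if P (t.e i) then (G.mult u (t.e i) : ℝ) else 0 := by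
    intro P
    have hc : ∀ x : E, (t.threadCount x : ℝ) = ∑ i : ZMod t.L, if t.e i = x then (1:ℝ) else 0 := by
      intro x
      rw [CycleTraversal.threadCount, Finset.card_filter]
      push_cast
      exact Finset.sum_congr rfl fun i _ => by split_ifs <;> norm_num
    calc (∑ x : E, if P x then (G.mult u x : ℝ) * (t.threadCount x : ℝ) else 0)
        = ∑ x : E, ∑ i : ZMod t.L, if t.e i = x then (if P x then (G.mult u x : ℝ) else 0) else 0 := by
          refine Finset.sum_congr rfl fun x _ => ?_
          rw [hc x]
          split_ifs with h
          · rw [Finset.mul_sum]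
            exact Finset.sum_congr rfl fun i _ => by split_ifs <;> simp [h]
          · simp [h]
      _ = ∑ i : ZMod t.L, ∑ x : E, if t.e i = x then (if P x then (G.mult u x : ℝ) else 0) else 0 :=
          Finset.sum_comm
      _ = ∑ i : ZMod t.L, if P (t.e i) then (G.mult u (t.e i) : ℝ) else 0 := by
          refine Finset.sum_congr rfl fun i _ => ?_
          rw [Finset.sum_ite_eq Finset.univ (t.e i) (fun x => if P x then (G.mult u x : ℝ) else 0)]
          simp
  rw [show (∑ x : E, if G.seg x then (G.mult u x : ℝ) * ((t.threadCount x : ℝ)) else 0)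
      = ∑ i : ZMod t.L, if G.seg (t.e i) then (G.mult u (t.e i) : ℝ) else 0 from key _]
  have keyT : (∑ x : E, (G.mult u x : ℝ) * (t.threadCount x : ℝ))
      = ∑ i : ZMod t.L, (G.mult u (t.e i) : ℝ) := by
    have k := key (fun _ => True)
    simpa using k
  have key2 : (∑ x : E, if G.seg x then 0 else (G.mult u x : ℝ) * (t.threadCount x : ℝ))
      = ∑ i : ZMod t.L, if ¬ G.seg (t.e i) then (G.mult u (t.e i) : ℝ) else 0 := by
    have e1 : (∑ x : E, if G.seg x then 0 else (G.mult u x : ℝ) * (t.threadCount x : ℝ))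
        = (∑ x : E, (G.mult u x : ℝ) * (t.threadCount x : ℝ))
          - ∑ x : E, if G.seg x then (G.mult u x : ℝ) * (t.threadCount x : ℝ) else 0 := by
      rw [← Finset.sum_sub_distrib]
      exact Finset.sum_congr rfl fun x _ => by split_ifs <;> ring
    have e2 : (∑ i : ZMod t.L, if ¬ G.seg (t.e i) then (G.mult u (t.e i) : ℝ) else 0)
        = (∑ i : ZMod t.L, (G.mult u (t.e i) : ℝ))
          - ∑ i : ZMod t.L, if G.seg (t.e i) then (G.mult u (t.e i) : ℝ) else 0 := by
      rw [← Finset.sum_sub_distrib]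
      exact Finset.sum_congr rfl fun i _ => by split_ifs <;> ring
    rw [e1, e2, keyT, key G.seg]
  rw [key2]
  -- now both sides are sums over i
  have hmult : ∀ i : ZMod t.L, (G.mult u (t.e i) : ℝ)
      = (if t.v (i-1) = u then (1:ℝ) else 0) + (if t.v i = u then (1:ℝ) else 0) := by
    intro i
    have := mult_eq (u := u) (t.compat i)
    rw [this]
    push_cast
    congr 1 <;> split_ifs <;> norm_num
  have hseg : ∀ i : ZMod t.L, G.seg (t.e i) ↔ Even i.val := ht.2
  set w : ZMod t.L → ℝ := fun i => if t.v i = u then (1:ℝ) else 0 with hw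
  have hPA : (∑ i : ZMod t.L, if Even i.val then w (i-1) else 0)
      = ∑ i : ZMod t.L, if ¬ Even i.val then w i else 0 := by
    rw [← Equiv.sum_comp (Equiv.addRight (1 : ZMod t.L))
      (fun i => if Even i.val then w (i-1) else 0)]
    refine Finset.sum_congr rfl fun j _ => ?_
    simp only [Equiv.coe_addRight]
    rw [add_sub_cancel_right]
    by_cases h : Even j.val <;> simp [h, parity_succ ht.1 j]
  have hPB : (∑ i : ZMod t.L, if ¬ Even i.val then w (i-1) else 0)
      = ∑ i : ZMod t.L, if Even i.val then w i else 0 := by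
    rw [← Equiv.sum_comp (Equiv.addRight (1 : ZMod t.L))
      (fun i => if ¬ Even i.val then w (i-1) else 0)]
    refine Finset.sum_congr rfl fun j _ => ?_
    simp only [Equiv.coe_addRight]
    rw [add_sub_cancel_right]
    by_cases h : Even j.val <;> simp [h, parity_succ ht.1 j]
  have hL1 : (∑ i : ZMod t.L, if G.seg (t.e i) then (G.mult u (t.e i) : ℝ) else 0)
      = (∑ i : ZMod t.L, if Even i.val then w (i-1) else 0)
        + ∑ i : ZMod t.L, if Even i.val then w i else 0 := by
    rw [← Finset.sum_add_distrib]
    refine Finset.sum_congr rfl fun i _ => ?_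
    rw [hmult i]
    by_cases h : Even i.val <;> simp [h, hseg i, hw]
  have hL2 : (∑ i : ZMod t.L, if ¬ G.seg (t.e i) then (G.mult u (t.e i) : ℝ) else 0)
      = (∑ i : ZMod t.L, if ¬ Even i.val then w (i-1) else 0)
        + ∑ i : ZMod t.L, if ¬ Even i.val then w i else 0 := by
    rw [← Finset.sum_add_distrib]
    refine Finset.sum_congr rfl fun i _ => ?_
    rw [hmult i]
    by_cases h : Even i.val <;> simp [h, hseg i, hw]
  rw [hL1, hL2, hPA, hPB]
  ring

end SeqGraph

namespace SeqGraph

variable {V E : Type} [Fintype V] [Fintype E] {G : SeqGraph V E}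

set_option linter.unusedSectionVars false in
set_option maxHeartbeats 1000000 in
lemma exists_traversal (f : E → ℝ) (hf : G.IsFlowR f) (hpos : ∀ x : E, 0 ≤ f x)
    (x₀ : E) (hx₀ : f x₀ ≠ 0) :
    ∃ t : G.CycleTraversal, t.IsSeqTraversal ∧ (∀ x : E, t.threadCount x ≠ 0 → 0 < f x) ∧
      ∃ x : E, t.threadCount x ≠ 0 := by
  have hterm : ∀ (P : E → Prop) (u : V) (z : E),
      0 ≤ (if P z then (G.mult u z : ℝ) * f z else 0) := by
    intro P u z
    split_ifs with h
    · exact mul_nonneg (by exact_mod_cast mult_nonneg (G := G) u z) (hpos z)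
    · exact le_refl 0
  have cross : ∀ (u : V) (x : E), 0 < f x → u ∈ G.ends x →
      ∃ (y : E) (w : V), 0 < f y ∧ G.ends y = s(u, w) ∧ (G.seg y ↔ ¬ G.seg x) := by
    intro u x hx hu
    have h1 : (1:ℝ) ≤ (G.mult u x : ℝ) := by exact_mod_cast one_le_mult hu
    by_cases hseg : G.seg x
    · have hpos_sum : 0 < ∑ z : E, if G.seg z then (G.mult u z : ℝ) * f z else 0 := by
        refine Finset.sum_pos' (fun z _ => hterm _ u z) ⟨x, Finset.mem_univ x, ?_⟩
        rw [if_pos hseg]; nlinarith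
      rw [hf u] at hpos_sum
      have hex : ∃ y : E, (if G.seg y then 0 else (G.mult u y : ℝ) * f y) ≠ 0 := by
        by_contra hc
        push_neg at hc
        rw [Finset.sum_eq_zero (fun y _ => hc y)] at hpos_sum
        exact lt_irrefl 0 hpos_sum
      obtain ⟨y, hy⟩ := hex
      have hysg : ¬ G.seg y := by intro h; rw [if_pos h] at hy; exact hy rfl
      rw [if_neg hysg] at hy
      have hmy : G.mult u y ≠ 0 := by
        intro h; rw [h] at hy; simp at hy
      have hfy : 0 < f y := (hpos y).lt_of_ne (by intro h; rw [← h] at hy; simp at hy)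
      have humem : u ∈ G.ends y := mem_of_mult_ne_zero hmy
      exact ⟨y, Sym2.Mem.other humem, hfy, (Sym2.other_spec humem).symm,
        by simp [hysg, hseg]⟩
    · have hpos_sum : 0 < ∑ z : E, if G.seg z then 0 else (G.mult u z : ℝ) * f z := by
        refine Finset.sum_pos' (fun z _ => ?_) ⟨x, Finset.mem_univ x, ?_⟩
        · split_ifs with h
          · exact le_refl 0
          · exact mul_nonneg (by exact_mod_cast mult_nonneg (G := G) u z) (hpos z)
        · rw [if_neg hseg]; nlinarith
      rw [← hf u] at hpos_sum
      have hex : ∃ y : E, (if G.seg y then (G.mult u y : ℝ) * f y else 0) ≠ 0 := by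
        by_contra hc
        push_neg at hc
        rw [Finset.sum_eq_zero (fun y _ => hc y)] at hpos_sum
        exact lt_irrefl 0 hpos_sum
      obtain ⟨y, hy⟩ := hex
      have hysg : G.seg y := by
        by_contra h; rw [if_neg h] at hy; exact hy rfl
      rw [if_pos hysg] at hy
      have hmy : G.mult u y ≠ 0 := by
        intro h; rw [h] at hy; simp at hy
      have hfy : 0 < f y := (hpos y).lt_of_ne (by intro h; rw [← h] at hy; simp at hy)
      have humem : u ∈ G.ends y := mem_of_mult_ne_zero hmy
      exact ⟨y, Sym2.Mem.other humem, hfy, (Sym2.other_spec humem).symm,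
        by simp [hysg, hseg]⟩
  -- total step function
  have cross' : ∀ p : V × E, ∃ q : V × E, 0 < f p.2 → p.1 ∈ G.ends p.2 →
      0 < f q.2 ∧ G.ends q.2 = s(p.1, q.1) ∧ (G.seg q.2 ↔ ¬ G.seg p.2) := by
    rintro ⟨u, x⟩
    by_cases h : 0 < f x ∧ u ∈ G.ends x
    · obtain ⟨y, w, h1, h2, h3⟩ := cross u x h.1 h.2
      exact ⟨(w, y), fun _ _ => ⟨h1, h2, h3⟩⟩
    · exact ⟨(u, x), fun h1 h2 => absurd ⟨h1, h2⟩ h⟩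
  choose step hstep using cross'
  -- initial segment edge
  have hfx₀ : 0 < f x₀ := (hpos x₀).lt_of_ne (Ne.symm hx₀)
  have init : ∃ x : E, 0 < f x ∧ G.seg x := by
    by_cases h : G.seg x₀
    · exact ⟨x₀, hfx₀, h⟩
    · obtain ⟨a₀, b₀, h₀⟩ : ∃ a b, G.ends x₀ = s(a, b) :=
        Sym2.ind (fun a b => ⟨a, b, rfl⟩) (G.ends x₀)
      have hmem : a₀ ∈ G.ends x₀ := by rw [h₀]; exact Sym2.mem_mk_left _ _
      obtain ⟨y, w, h1, h2, h3⟩ := cross a₀ x₀ hfx₀ hmem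
      exact ⟨y, h1, h3.mpr h⟩
  obtain ⟨xs, hxs, hxseg⟩ := init
  obtain ⟨a, b, hab⟩ : ∃ a b, G.ends xs = s(a, b) :=
    Sym2.ind (fun a b => ⟨a, b, rfl⟩) (G.ends xs)
  -- the infinite alternating walk
  let g : ℕ → V × E := fun n => Nat.rec (b, xs) (fun _ p => step p) n
  let vv : ℕ → V := fun n => Nat.rec a (fun m _ => (g m).1) n
  let ee : ℕ → E := fun n => (g n).2
  have hgsucc : ∀ m : ℕ, g (m + 1) = step (g m) := fun m => rfl
  have hvv : ∀ m : ℕ, vv (m + 1) = (g m).1 := fun m => rfl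
  have inv : ∀ n : ℕ, 0 < f (ee n) ∧ G.ends (ee n) = s(vv n, vv (n+1)) ∧
      (G.seg (ee n) ↔ Even n) := by
    intro n
    induction n with
    | zero => exact ⟨hxs, hab, ⟨fun _ => Even.zero, fun _ => hxseg⟩⟩
    | succ m ihm =>
      obtain ⟨h1, h2, h3⟩ := ihm
      have hmem : vv (m+1) ∈ G.ends (ee m) := by rw [h2]; exact Sym2.mem_mk_right _ _
      have hpair : (vv (m+1), ee m) = g m := by
        rw [hvv m]
      have hs := hstep (vv (m+1), ee m) h1 hmem
      have hee : ee (m+1) = (step (vv (m+1), ee m)).2 := by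
        show (g (m+1)).2 = _
        rw [hgsucc m, hpair]
      have hvv2 : vv (m+2) = (step (vv (m+1), ee m)).1 := by
        rw [hvv (m+1), hgsucc m, hpair]
      refine ⟨?_, ?_, ?_⟩
      · rw [hee]; exact hs.1
      · rw [hee, hvv2]; exact hs.2.1
      · rw [hee, hs.2.2, h3, Nat.even_add_one]
  -- pigeonhole on even positions
  obtain ⟨i, j, hij, hveq⟩ :=
    Fintype.exists_ne_map_eq_of_card_lt
      (fun i : Fin (Fintype.card V + 1) => vv (2 * (i : ℕ))) (by simp)
  obtain ⟨A, B, hAB, hvAB⟩ : ∃ A B : ℕ, A < B ∧ vv (2*A) = vv (2*B) := by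
    rcases Ne.lt_or_gt hij with h | h
    · exact ⟨i, j, h, hveq⟩
    · exact ⟨j, i, h, hveq.symm⟩
  set L : ℕ := 2 * (B - A) with hLdef
  have hL2 : 2 ≤ L := by omega
  have hLpos : L ≠ 0 := by omega
  haveI : NeZero L := ⟨hLpos⟩
  haveI : Fact (1 < L) := ⟨by omega⟩
  have hwrap : 2 * A + L = 2 * B := by omega
  have hcompat : ∀ i : ZMod L, G.ends (ee (2 * A + i.val))
      = s(vv (2 * A + (i - 1).val + 1), vv (2 * A + i.val + 1)) := by
    intro i
    obtain ⟨j, rfl⟩ : ∃ j : ZMod L, j + 1 = i := ⟨i - 1, by ring⟩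
    rw [add_sub_cancel_right]
    have hval : (j + 1).val = (j.val + 1) % L := by
      rw [ZMod.val_add, ZMod.val_one]
    have hjlt : j.val < L := ZMod.val_lt j
    by_cases hcase : j.val + 1 < L
    · rw [hval, Nat.mod_eq_of_lt hcase]
      exact (inv (2 * A + (j.val + 1))).2.1
    · have hjtop : j.val + 1 = L := by omega
      rw [hval, hjtop, Nat.mod_self]
      have := (inv (2 * A + 0)).2.1
      rw [this]
      have hv1 : vv (2 * A + 0) = vv (2 * A + j.val + 1) := by
        have : 2 * A + j.val + 1 = 2 * B := by omega
        rw [this]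
        simpa using hvAB
      rw [← hv1]
  refine ⟨⟨L, hLpos, fun i => ee (2 * A + i.val), fun i => vv (2 * A + i.val + 1),
    hcompat⟩, ⟨⟨B - A, by show L = (B - A) + (B - A); omega⟩, ?_⟩, ?_, ?_⟩
  · intro i
    have := (inv (2 * A + i.val)).2.2
    rw [this, Nat.even_iff, Nat.even_iff]
    omega
  · intro x hx
    rw [CycleTraversal.threadCount] at hx
    have : (Finset.univ.filter fun i : ZMod L => ee (2 * A + i.val) = x).Nonempty :=
      Finset.card_pos.mp (Nat.pos_of_ne_zero hx)
    obtain ⟨i, hi⟩ := this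
    have hi2 := (Finset.mem_filter.mp hi).2
    rw [← hi2]
    exact (inv (2 * A + i.val)).1
  · refine ⟨ee (2 * A), ?_⟩
    rw [CycleTraversal.threadCount]
    refine Finset.card_ne_zero_of_mem (a := (0 : ZMod L)) ?_
    simp [ZMod.val_zero]

end SeqGraph

set_option linter.unusedSectionVars false in
set_option maxHeartbeats 1000000 in
lemma SeqGraph.sub_smul_flowR {V E : Type} [Fintype V] [Fintype E] {G : SeqGraph V E}
    {f g : E → ℝ} (hf : G.IsFlowR f) (hg : G.IsFlowR g) (c : ℝ) :
    G.IsFlowR (fun x => f x - c * g x) := by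
  intro u
  have l : (∑ x : E, if G.seg x then (G.mult u x : ℝ) * (f x - c * g x) else 0)
      = (∑ x : E, if G.seg x then (G.mult u x : ℝ) * f x else 0)
        - c * ∑ x : E, if G.seg x then (G.mult u x : ℝ) * g x else 0 := by
    rw [Finset.mul_sum, ← Finset.sum_sub_distrib]
    exact Finset.sum_congr rfl fun x _ => by split_ifs <;> ring
  have r : (∑ x : E, if G.seg x then 0 else (G.mult u x : ℝ) * (f x - c * g x))
      = (∑ x : E, if G.seg x then 0 else (G.mult u x : ℝ) * f x)
        - c * ∑ x : E, if G.seg x then 0 else (G.mult u x : ℝ) * g x := by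
    rw [Finset.mul_sum, ← Finset.sum_sub_distrib]
    exact Finset.sum_congr rfl fun x _ => by split_ifs <;> ring
  rw [l, r, hf u, hg u]

set_option maxHeartbeats 1000000 in
lemma SeqGraph.main_aux {V E : Type} [Fintype V] [Fintype E] (G : SeqGraph V E) :
    ∀ (n : ℕ) (f : E → ℝ), G.IsFlowR f → (∀ x : E, 0 ≤ f x) →
    (Finset.univ.filter fun x : E => f x ≠ 0).card ≤ n →
    ∃ (q : ℕ) (T : Fin q → G.CycleTraversal) (π : Fin q → ℝ),
      (∀ k : Fin q, 0 ≤ π k) ∧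
      (∀ k : Fin q, (T k).IsSeqTraversal) ∧
      f = fun x : E => ∑ k : Fin q, π k * ((T k).threadCount x : ℝ) := by
  intro n
  induction n with
  | zero =>
    intro f hf hpos hcard
    have hzero : ∀ x : E, f x = 0 := by
      intro x
      by_contra hx
      have : x ∈ Finset.univ.filter fun x : E => f x ≠ 0 := by
        simp [hx]
      have := Finset.card_pos.mpr ⟨x, this⟩
      omega
    exact ⟨0, Fin.elim0, Fin.elim0, fun k => k.elim0, fun k => k.elim0,
      funext fun x => by simp [hzero x]⟩
  | succ n ih =>
    intro f hf hpos hcard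
    by_cases hzero : ∀ x : E, f x = 0
    · exact ⟨0, Fin.elim0, Fin.elim0, fun k => k.elim0, fun k => k.elim0,
        funext fun x => by simp [hzero x]⟩
    · push_neg at hzero
      obtain ⟨x₀, hx₀⟩ := hzero
      obtain ⟨t, ht, hsupp, x₁, hx₁⟩ := SeqGraph.exists_traversal f hf hpos x₀ hx₀
      have hflowt : G.IsFlowR (fun x => (t.threadCount x : ℝ)) :=
        SeqGraph.isFlowR_threadCount t ht
      set s := Finset.univ.filter fun x : E => t.threadCount x ≠ 0 with hs
      have hsne : s.Nonempty := ⟨x₁, by simp [hs, hx₁]⟩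
      obtain ⟨z, hzs, hzmin⟩ :=
        Finset.exists_min_image s (fun x => f x / (t.threadCount x : ℝ)) hsne
      have hzcnt : t.threadCount z ≠ 0 := (Finset.mem_filter.mp hzs).2
      have hzcntR : (0:ℝ) < (t.threadCount z : ℝ) := by exact_mod_cast Nat.pos_of_ne_zero hzcnt
      set c : ℝ := f z / (t.threadCount z : ℝ) with hc
      have hc0 : 0 ≤ c := div_nonneg (hpos z) hzcntR.le
      set f' : E → ℝ := fun x => f x - c * (t.threadCount x : ℝ) with hf'def
      have hf' : G.IsFlowR f' := SeqGraph.sub_smul_flowR hf hflowt c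
      have hpos' : ∀ x : E, 0 ≤ f' x := by
        intro x
        by_cases hx : t.threadCount x = 0
        · simp [hf'def, hx]; exact hpos x
        · have hxs : x ∈ s := by simp [hs, hx]
          have := hzmin x hxs
          have hcx : (0:ℝ) < (t.threadCount x : ℝ) := by exact_mod_cast Nat.pos_of_ne_zero hx
          have : c * (t.threadCount x : ℝ) ≤ f x := (le_div_iff₀ hcx).mp this
          simpa [hf'def] using this
      have hfz' : f' z = 0 := by
        simp only [hf'def, hc]
        rw [div_mul_cancel₀ _ (ne_of_gt hzcntR)]
        ring
      have hsub : (Finset.univ.filter fun x : E => f' x ≠ 0)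
          ⊆ (Finset.univ.filter fun x : E => f x ≠ 0).erase z := by
        intro x hx
        have hx' : f' x ≠ 0 := (Finset.mem_filter.mp hx).2
        have hfx : f x ≠ 0 := by
          intro h
          have hcnt : t.threadCount x = 0 := by
            by_contra hcnt
            exact absurd h (ne_of_gt (hsupp x hcnt))
          apply hx'
          simp [hf'def, h, hcnt]
        refine Finset.mem_erase.mpr ⟨?_, by simp [hfx]⟩
        intro h
        rw [h] at hx'
        exact hx' hfz'
      have hzmem : z ∈ Finset.univ.filter fun x : E => f x ≠ 0 := by
        simp [ne_of_gt (hsupp z hzcnt)]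
      have hcard' : (Finset.univ.filter fun x : E => f' x ≠ 0).card ≤ n := by
        have h1 := Finset.card_le_card hsub
        rw [Finset.card_erase_of_mem hzmem] at h1
        omega
      obtain ⟨q, T, π, hπ, hT, heq⟩ := ih f' hf' hpos' hcard'
      refine ⟨q + 1, Fin.cons t T, Fin.cons c π, ?_, ?_, ?_⟩
      · intro k
        refine Fin.cases ?_ ?_ k
        · simpa using hc0
        · intro i; simpa using hπ i
      · intro k
        refine Fin.cases ?_ ?_ k
        · simpa using ht
        · intro i; simpa using hT i
      · funext x
        have := congrFun heq x
        rw [Fin.sum_univ_succ]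
        simp only [Fin.cons_zero, Fin.cons_succ]
        rw [← this]
        simp [hf'def]


/-- Every nonnegative real-valued flow is a nonnegative linear combination of
thread flows of sequence traversals. -/
theorem stmt_6 (V E : Type) [Fintype V] [Fintype E] (G : SeqGraph V E)
    (f : E → ℝ) (hf : G.IsFlowR f) (hpos : ∀ x : E, 0 ≤ f x) :
    ∃ (q : ℕ) (T : Fin q → G.CycleTraversal) (π : Fin q → ℝ),
      (∀ k : Fin q, 0 ≤ π k) ∧
      (∀ k : Fin q, (T k).IsSeqTraversal) ∧
      f = fun x : E => ∑ k : Fin q, π k * ((T k).threadCount x : ℝ) := by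
  exact G.main_aux _ f hf hpos le_rfl
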